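/- Let Ψ_λ(z; r) be the derivative in z of the Moreau-type regularization ρ(z; r) = min_x { r ρ_λ(x) + (1/2)(x − z)² }, where ρ_λ is the Huber loss. Then Ψ_λ(z; r) = r · ψ_λ(z/(1+r)) for all z ∈ ℝ and r > 0. -/

import Mathlib

/-- Huber loss function. -/
noncomputable def huberLoss (lam z : ℝ) : ℝ :=
  if |z| ≤ lam then z ^ 2 / 2 else lam * |z| - lam ^ 2 / 2

/-- Huber score function. -/
noncomputable def huberScore (lam x : ℝ) : ℝ := min lam (max (-lam) x)

/-- Moreau-type regularization of the Huber loss. -/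
noncomputable def regHuberLoss (lam r z : ℝ) : ℝ :=
  ⨅ x : ℝ, (r * huberLoss lam x + (x - z) ^ 2 / 2)

lemma huberScore_abs_le (lam x : ℝ) (hlam : 0 < lam) : |huberScore lam x| ≤ lam := by
  rw [abs_le]
  exact ⟨le_min (by linarith) (le_max_left _ _), min_le_left _ _⟩

lemma huberScore_of_le (lam x : ℝ) (hlam : 0 < lam) (h : x ≤ -lam) :
    huberScore lam x = -lam := by
  unfold huberScore
  rw [max_eq_left h, min_eq_right (by linarith)]

lemma huberScore_of_ge (lam x : ℝ) (h : lam ≤ x) : huberScore lam x = lam := by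
  unfold huberScore
  exact min_eq_left (le_max_of_le_right h)

lemma huberScore_of_mem (lam x : ℝ) (h1 : -lam ≤ x) (h2 : x ≤ lam) :
    huberScore lam x = x := by
  unfold huberScore
  rw [max_eq_right h1, min_eq_right h2]

lemma huberLoss_eq_score (lam y : ℝ) (hlam : 0 < lam) :
    huberLoss lam y = huberScore lam y * y - (huberScore lam y) ^ 2 / 2 := by
  by_cases hy : |y| ≤ lam
  · rw [abs_le] at hy
    rw [huberScore_of_mem lam y hy.1 hy.2]
    unfold huberLoss
    rw [if_pos (abs_le.2 hy)]
    ring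
  · push_neg at hy
    unfold huberLoss
    rw [if_neg (not_le.2 hy)]
    rcases le_or_gt y 0 with h | h
    · rw [abs_of_nonpos h] at hy ⊢
      rw [huberScore_of_le lam y hlam (by linarith)]
      ring
    · rw [abs_of_pos h] at hy ⊢
      rw [huberScore_of_ge lam y (by linarith)]

lemma huberLoss_ge (lam x t : ℝ) (hlam : 0 < lam) (ht : |t| ≤ lam) :
    t * x - t ^ 2 / 2 ≤ huberLoss lam x := by
  unfold huberLoss
  by_cases hx : |x| ≤ lam
  · rw [if_pos hx]; nlinarith [sq_nonneg (x - t)]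
  · rw [if_neg hx]
    push_neg at hx
    have h1 : t * x ≤ |t| * |x| := by
      calc t * x ≤ |t * x| := le_abs_self _
        _ = |t| * |x| := abs_mul _ _
    nlinarith [sq_abs t, mul_nonneg (sub_nonneg.2 ht) (sub_nonneg.2 hx.le),
      sq_nonneg (lam - |t|)]

lemma huberScore_scale (lam x c : ℝ) (hc : 0 < c) :
    huberScore (c * lam) (c * x) = c * huberScore lam x := by
  unfold huberScore
  rw [mul_min_of_nonneg _ _ hc.le, mul_max_of_nonneg _ _ hc.le, mul_neg]

lemma huberLoss_nonneg (lam x : ℝ) (hlam : 0 < lam) : 0 ≤ huberLoss lam x := by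
  unfold huberLoss
  by_cases hx : |x| ≤ lam
  · rw [if_pos hx]; positivity
  · rw [if_neg hx]; push_neg at hx; nlinarith

lemma huberScore_fixed (lam r z : ℝ) (hlam : 0 < lam) (hr : 0 < r) :
    huberScore lam (z - r * huberScore lam (z / (1 + r))) =
      huberScore lam (z / (1 + r)) := by
  have hr1 : (0:ℝ) < 1 + r := by linarith
  rcases le_total (z / (1 + r)) (-lam) with h | h
  · have hz : z ≤ -lam * (1 + r) := by
      rw [div_le_iff₀ hr1] at h; linarith [h]
    rw [huberScore_of_le lam _ hlam h]
    exact huberScore_of_le lam _ hlam (by nlinarith)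
  · rcases le_total lam (z / (1 + r)) with h2 | h2
    · have hz : lam * (1 + r) ≤ z := by
        rw [le_div_iff₀ hr1] at h2; linarith [h2]
      rw [huberScore_of_ge lam _ h2]
      exact huberScore_of_ge lam _ (by nlinarith)
    · rw [huberScore_of_mem lam _ h h2]
      have he : z - r * (z / (1 + r)) = z / (1 + r) := by
        field_simp; ring
      rw [he, huberScore_of_mem lam _ h h2]

lemma regHuberLoss_closed (lam r : ℝ) (hlam : 0 < lam) (hr : 0 < r) (z : ℝ) :
    regHuberLoss lam r z = r / (1 + r) * huberLoss (lam * (1 + r)) z := by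
  have hr1 : (0:ℝ) < 1 + r := by linarith
  set s := huberScore lam (z / (1 + r)) with hs_def
  have hs : |s| ≤ lam := huberScore_abs_le lam _ hlam
  have hmu : huberScore (lam * (1 + r)) z = (1 + r) * s := by
    have h := huberScore_scale lam (z / (1 + r)) (1 + r) hr1
    rw [mul_div_cancel₀ _ (ne_of_gt hr1)] at h
    rw [mul_comm lam (1 + r)]
    exact h
  have hval : r * huberLoss lam (z - r * s) + ((z - r * s) - z) ^ 2 / 2 =
      r / (1 + r) * huberLoss (lam * (1 + r)) z := by
    rw [huberLoss_eq_score lam _ hlam, huberScore_fixed lam r z hlam hr, ← hs_def,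
      huberLoss_eq_score (lam * (1 + r)) z (by positivity), hmu]
    field_simp
    ring
  unfold regHuberLoss
  apply le_antisymm
  · calc (⨅ x : ℝ, (r * huberLoss lam x + (x - z) ^ 2 / 2))
        ≤ r * huberLoss lam (z - r * s) + ((z - r * s) - z) ^ 2 / 2 := by
          apply ciInf_le
          refine ⟨0, ?_⟩
          rintro y ⟨x, rfl⟩
          have := huberLoss_nonneg lam x hlam
          positivity
      _ = r / (1 + r) * huberLoss (lam * (1 + r)) z := hval
  · apply le_ciInf
    intro x
    rw [← hval]
    have h1 := huberLoss_ge lam x s hlam hs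
    have h2 := huberLoss_eq_score lam (z - r * s) hlam
    rw [huberScore_fixed lam r z hlam hr, ← hs_def] at h2
    rw [h2]
    nlinarith [sq_nonneg (x - z + r * s)]

lemma huberLoss_hasDerivAt (lam : ℝ) (hlam : 0 < lam) (z : ℝ) :
    HasDerivAt (huberLoss lam) (huberScore lam z) z := by
  have hq : ∀ y : ℝ, HasDerivAt (fun x : ℝ => x ^ 2 / 2) y y := by
    intro y
    have := (hasDerivAt_pow 2 y).div_const 2
    simpa using this
  have hlinp : ∀ y : ℝ, HasDerivAt (fun x : ℝ => lam * x - lam ^ 2 / 2) lam y := by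
    intro y
    simpa using ((hasDerivAt_id y).const_mul lam).sub_const (lam ^ 2 / 2)
  have hlinn : ∀ y : ℝ, HasDerivAt (fun x : ℝ => -lam * x - lam ^ 2 / 2) (-lam) y := by
    intro y
    simpa using ((hasDerivAt_id y).const_mul (-lam)).sub_const (lam ^ 2 / 2)
  -- equalities on regions
  have hEp : ∀ x : ℝ, lam ≤ x → huberLoss lam x = lam * x - lam ^ 2 / 2 := by
    intro x hx
    unfold huberLoss
    rcases eq_or_lt_of_le hx with h | h
    · rw [← h]
      rw [if_pos (by rw [abs_of_pos hlam])]
      ring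
    · rw [if_neg (by rw [abs_of_pos (by linarith)]; linarith),
        abs_of_pos (by linarith)]
  have hEn : ∀ x : ℝ, x ≤ -lam → huberLoss lam x = -lam * x - lam ^ 2 / 2 := by
    intro x hx
    unfold huberLoss
    rcases eq_or_lt_of_le hx with h | h
    · rw [h]
      rw [if_pos (by rw [abs_of_neg (by linarith)]; linarith)]
      ring
    · rw [if_neg (by rw [abs_of_neg (by linarith)]; linarith),
        abs_of_neg (by linarith)]
      ring
  have hEm : ∀ x : ℝ, |x| ≤ lam → huberLoss lam x = x ^ 2 / 2 := by
    intro x hx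
    unfold huberLoss
    rw [if_pos hx]
  rcases lt_trichotomy z (-lam) with h | h | h
  · -- z < -lam
    rw [huberScore_of_le lam z hlam h.le]
    refine (hlinn z).congr_of_eventuallyEq ?_
    filter_upwards [eventually_lt_nhds h] with x hx
    exact hEn x hx.le
  · -- z = -lam : glue
    rw [h, huberScore_of_le lam (-lam) hlam le_rfl]
    have hleft : HasDerivWithinAt (huberLoss lam) (-lam) (Set.Iic (-lam)) (-lam) := by
      refine ((hlinn (-lam)).hasDerivWithinAt).congr (fun x hx => hEn x hx) ?_
      exact hEn _ le_rfl
    have hright : HasDerivWithinAt (huberLoss lam) (-lam) (Set.Ici (-lam)) (-lam) := by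
      have hd : HasDerivWithinAt (fun x : ℝ => x ^ 2 / 2) (-lam) (Set.Ici (-lam)) (-lam) :=
        (hq (-lam)).hasDerivWithinAt
      refine hd.congr_of_eventuallyEq ?_ ?_
      · have hev : ∀ᶠ x in nhds (-lam : ℝ), x < lam := eventually_lt_nhds (by linarith)
        filter_upwards [self_mem_nhdsWithin,
          eventually_nhdsWithin_of_eventually_nhds hev] with x hx1 hx2
        exact hEm x (abs_le.2 ⟨hx1, hx2.le⟩)
      · exact hEm _ (by rw [abs_of_neg (by linarith)]; linarith)
    have h2 := hleft.union hright
    rw [Set.Iic_union_Ici] at h2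
    exact hasDerivWithinAt_univ.mp h2
  · rcases lt_trichotomy z lam with h2 | h2 | h2
    · -- -lam < z < lam
      rw [huberScore_of_mem lam z h.le h2.le]
      refine (hq z).congr_of_eventuallyEq ?_
      filter_upwards [eventually_gt_nhds h, eventually_lt_nhds h2] with x hx1 hx2
      exact hEm x (abs_le.2 ⟨hx1.le, hx2.le⟩)
    · -- z = lam
      rw [h2, huberScore_of_ge lam lam le_rfl]
      have hleft : HasDerivWithinAt (huberLoss lam) lam (Set.Iic lam) lam := by
        have hd : HasDerivWithinAt (fun x : ℝ => x ^ 2 / 2) lam (Set.Iic lam) lam :=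
          (hq lam).hasDerivWithinAt
        refine hd.congr_of_eventuallyEq ?_ ?_
        · have hev : ∀ᶠ x in nhds (lam : ℝ), -lam < x := eventually_gt_nhds (by linarith)
          filter_upwards [self_mem_nhdsWithin,
            eventually_nhdsWithin_of_eventually_nhds hev] with x hx1 hx2
          exact hEm x (abs_le.2 ⟨hx2.le, hx1⟩)
        · exact hEm _ (by rw [abs_of_pos hlam])
      have hright : HasDerivWithinAt (huberLoss lam) lam (Set.Ici lam) lam := by
        refine ((hlinp lam).hasDerivWithinAt).congr (fun x hx => hEp x hx) ?_
        exact hEp _ le_rfl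
      have h3 := hleft.union hright
      rw [Set.Iic_union_Ici] at h3
      exact hasDerivWithinAt_univ.mp h3
    · -- lam < z
      rw [huberScore_of_ge lam z h2.le]
      refine (hlinp z).congr_of_eventuallyEq ?_
      filter_upwards [eventually_gt_nhds h2] with x hx
      exact hEp x hx.le

/-- The derivative in z of the regularized Huber loss equals
r · ψ_λ(z/(1+r)). -/
theorem regHuberScore_eq (lam r : ℝ) (hlam : 0 < lam) (hr : 0 < r) :
    ∀ z : ℝ, HasDerivAt (regHuberLoss lam r)
      (r * huberScore lam (z / (1 + r))) z := by
  intro z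
  have hr1 : (0:ℝ) < 1 + r := by linarith
  have hfun : regHuberLoss lam r = fun z => r / (1 + r) * huberLoss (lam * (1 + r)) z :=
    funext (regHuberLoss_closed lam r hlam hr)
  rw [hfun]
  have hd := (huberLoss_hasDerivAt (lam * (1 + r)) (by positivity) z).const_mul (r / (1 + r))
  have hmu : huberScore (lam * (1 + r)) z = (1 + r) * huberScore lam (z / (1 + r)) := by
    have h := huberScore_scale lam (z / (1 + r)) (1 + r) hr1
    rw [mul_div_cancel₀ _ (ne_of_gt hr1)] at h
    rw [mul_comm lam (1 + r)]
    exact h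
  rw [hmu] at hd
  have heq : r / (1 + r) * ((1 + r) * huberScore lam (z / (1 + r))) =
      r * huberScore lam (z / (1 + r)) := by
    field_simp
  rwa [heq] at hd
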